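/- arXiv:1503.02062 — 2 statements merged into one kernel-verified Lean document; each statement's English description precedes it below -/
import Mathlib

section
/- Forced terminal value of the singular linear ODE (from the Remark after Theorem 4.14): Let T > 0, let λ : [0,T) → [0,∞) be continuous with ∫_0^t λ(s) ds → +∞ as t → T⁻, and let ξ : [0,T] → ℝ be bounded and continuously differentiable. Then every differentiable function x : [0,T) → ℝ satisfying x′(t) = λ(t)·(e^{ξ(t)} − x(t)) for all t ∈ [0,T) satisfies lim_{t → T⁻} x(t) = e^{ξ(T)}. In particular, the terminal value problem x′ = λ(e^{ξ} − x) on [0,T) with lim_{t→T⁻} x(t) = B has a solution if and only if B = e^{ξ(T)}. -/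
open MeasureTheory Filter Topology

set_option linter.unusedVariables false

lemma ftc0 {T : ℝ} (f : ℝ → ℝ) (hf : ContinuousOn f (Set.Ico 0 T)) {t : ℝ} (ht : t ∈ Set.Ico 0 T) :
    HasDerivWithinAt (fun u => ∫ s in (0:ℝ)..u, f s) (f t) (Set.Ico 0 T) t := by
  have hsub : Set.Icc 0 t ⊆ Set.Ico 0 T := fun u hu => ⟨hu.1, lt_of_le_of_lt hu.2 ht.2⟩
  have hint : IntervalIntegrable f volume 0 t := by
    apply ContinuousOn.intervalIntegrable
    rw [Set.uIcc_of_le ht.1]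
    exact hf.mono hsub
  rcases eq_or_lt_of_le ht.1 with h0 | h0
  · -- t = 0
    subst h0
    have hmem : Set.Ico (0:ℝ) T ∈ 𝓝[Set.Ioi (0:ℝ)] 0 := by
      apply mem_nhdsWithin.mpr
      exact ⟨Set.Iio T, isOpen_Iio, ht.2, fun u hu => ⟨le_of_lt hu.2, hu.1⟩⟩
    have hmeas : StronglyMeasurableAtFilter f (𝓝[Set.Ioi (0:ℝ)] 0) :=
      ⟨Set.Ico 0 T, hmem, hf.aestronglyMeasurable measurableSet_Ico⟩
    have hcont : ContinuousWithinAt f (Set.Ioi (0:ℝ)) 0 :=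
      (hf 0 ht).mono_of_mem_nhdsWithin hmem
    have := intervalIntegral.integral_hasDerivWithinAt_right (s := Set.Ici (0:ℝ))
      (t := Set.Ioi (0:ℝ)) hint hmeas hcont
    exact this.mono (fun u hu => hu.1)
  · -- 0 < t
    have hnb : Set.Ico (0:ℝ) T ∈ 𝓝 t := Ico_mem_nhds h0 ht.2
    have hmeas : StronglyMeasurableAtFilter f (𝓝 t) :=
      ⟨Set.Ico 0 T, hnb, hf.aestronglyMeasurable measurableSet_Ico⟩
    have hcont : ContinuousAt f t := hf.continuousAt hnb
    exact (intervalIntegral.integral_hasDerivAt_right hint hmeas hcont).hasDerivWithinAt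

lemma aux_decay {T : ℝ} (hT : 0 < T) (Lam g : ℝ → ℝ) (M : ℝ) (hM : 0 ≤ M)
    (hg : ContinuousOn g (Set.Ico 0 T))
    (hbound : ∀ t ∈ Set.Ico (0:ℝ) T, |g t| ≤ M * Real.exp (Lam t))
    (hmono : ∀ a b : ℝ, 0 ≤ a → a ≤ b → b < T → Lam a ≤ Lam b)
    (hdiv : Tendsto Lam (nhdsWithin T (Set.Iio T)) atTop) :
    Tendsto (fun t => Real.exp (-(Lam t)) * ∫ s in (0:ℝ)..t, g s)
      (nhdsWithin T (Set.Iio T)) (𝓝 0) := by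
  rw [NormedAddCommGroup.tendsto_nhds_zero]
  intro ε hε
  have hM1 : (0:ℝ) < M + 1 := by linarith
  set t0 : ℝ := max 0 (T - ε / (2 * (M + 1))) with ht0def
  have ht00 : 0 ≤ t0 := le_max_left _ _
  have hpos : 0 < ε / (2 * (M + 1)) := by positivity
  have ht0T : t0 < T := max_lt hT (by linarith)
  have hTt0 : M * (T - t0) < ε / 2 := by
    have h1 : T - t0 ≤ ε / (2 * (M + 1)) := by
      have := le_max_right 0 (T - ε / (2 * (M + 1)))
      linarith
    have h2 : M * (T - t0) ≤ M * (ε / (2 * (M + 1))) :=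
      mul_le_mul_of_nonneg_left h1 hM
    have h3 : M * (ε / (2 * (M + 1))) < ε / 2 := by
      have he : M * (ε / (2 * (M + 1))) = M * ε / (2 * (M + 1)) := by ring
      rw [he, div_lt_iff₀ (by positivity)]
      nlinarith
    linarith
  set C0 : ℝ := |∫ s in (0:ℝ)..t0, g s| with hC0def
  have hexp0 : Tendsto (fun t => Real.exp (-(Lam t))) (nhdsWithin T (Set.Iio T)) (𝓝 0) :=
    Real.tendsto_exp_atBot.comp (tendsto_neg_atTop_atBot.comp hdiv)
  have hev1 : ∀ᶠ t in nhdsWithin T (Set.Iio T), Real.exp (-(Lam t)) * C0 < ε / 2 := by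
    have h := hexp0.mul_const C0
    rw [zero_mul] at h
    exact h.eventually_lt_const (by linarith)
  have hev2 : ∀ᶠ t in nhdsWithin T (Set.Iio T), t ∈ Set.Ioo t0 T := by
    have h1 : ∀ᶠ t in nhdsWithin T (Set.Iio T), t0 < t :=
      eventually_nhdsWithin_of_eventually_nhds (eventually_gt_nhds ht0T)
    filter_upwards [h1, eventually_mem_nhdsWithin] with t ha hb
    exact ⟨ha, hb⟩
  filter_upwards [hev1, hev2] with t h1 h2
  have ht0t : t0 ≤ t := le_of_lt h2.1
  have htT : t < T := h2.2
  have hsub1 : Set.Icc (0:ℝ) t0 ⊆ Set.Ico 0 T := fun u hu => ⟨hu.1, lt_of_le_of_lt hu.2 ht0T⟩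
  have hsub2 : Set.Icc t0 t ⊆ Set.Ico 0 T := fun u hu => ⟨le_trans ht00 hu.1, lt_of_le_of_lt hu.2 htT⟩
  have hi1 : IntervalIntegrable g volume 0 t0 := by
    apply ContinuousOn.intervalIntegrable
    rw [Set.uIcc_of_le ht00]
    exact hg.mono hsub1
  have hi2 : IntervalIntegrable g volume t0 t := by
    apply ContinuousOn.intervalIntegrable
    rw [Set.uIcc_of_le ht0t]
    exact hg.mono hsub2
  have hsplit : (∫ s in (0:ℝ)..t, g s) = (∫ s in (0:ℝ)..t0, g s) + ∫ s in t0..t, g s :=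
    (intervalIntegral.integral_add_adjacent_intervals hi1 hi2).symm
  have habs2 : |∫ s in t0..t, g s| ≤ M * Real.exp (Lam t) * (t - t0) := by
    calc |∫ s in t0..t, g s| ≤ ∫ s in t0..t, |g s| :=
          intervalIntegral.abs_integral_le_integral_abs ht0t
      _ ≤ ∫ s in t0..t, M * Real.exp (Lam t) := by
          apply intervalIntegral.integral_mono_on ht0t hi2.abs intervalIntegrable_const
          intro s hs
          have hsm : s ∈ Set.Ico (0:ℝ) T := hsub2 hs
          refine le_trans (hbound s hsm) ?_
          exact mul_le_mul_of_nonneg_left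
            (Real.exp_le_exp.mpr (hmono s t hsm.1 hs.2 htT)) hM
      _ = M * Real.exp (Lam t) * (t - t0) := by
          rw [intervalIntegral.integral_const, smul_eq_mul]; ring
  have hee : Real.exp (-(Lam t)) * Real.exp (Lam t) = 1 := by
    rw [← Real.exp_add]; simp
  have hepos : (0:ℝ) < Real.exp (-(Lam t)) := Real.exp_pos _
  have hIabs : |∫ s in (0:ℝ)..t, g s| ≤ C0 + M * Real.exp (Lam t) * (t - t0) := by
    rw [hsplit]
    exact le_trans (abs_add_le _ _) (by rw [hC0def]; linarith)
  rw [Real.norm_eq_abs, abs_mul, abs_of_pos hepos]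
  have hbnd : Real.exp (-(Lam t)) * |∫ s in (0:ℝ)..t, g s|
      ≤ Real.exp (-(Lam t)) * C0 + M * (t - t0) := by
    have := mul_le_mul_of_nonneg_left hIabs (le_of_lt hepos)
    calc Real.exp (-(Lam t)) * |∫ s in (0:ℝ)..t, g s|
        ≤ Real.exp (-(Lam t)) * (C0 + M * Real.exp (Lam t) * (t - t0)) := this
      _ = Real.exp (-(Lam t)) * C0
          + (Real.exp (-(Lam t)) * Real.exp (Lam t)) * (M * (t - t0)) := by ring
      _ = Real.exp (-(Lam t)) * C0 + M * (t - t0) := by rw [hee]; ring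
  have hlast : M * (t - t0) ≤ M * (T - t0) :=
    mul_le_mul_of_nonneg_left (by linarith) hM
  linarith

/-- Forced terminal value of the singular linear ODE: when Λ_t = ∫_0^t λ → ∞ as t → T⁻
and ξ is bounded and continuously differentiable on [0,T], every solution of
x′ = λ(e^ξ − x) on [0,T) satisfies x(t) → e^{ξ(T)} as t → T⁻; in particular the terminal
value problem with prescribed limit B is solvable iff B = e^{ξ(T)}. -/
theorem stmt_8 (T : ℝ) (hT : 0 < T) (lam : ℝ → ℝ)
    (hlam_cont : ContinuousOn lam (Set.Ico 0 T))
    (hlam_nonneg : ∀ t ∈ Set.Ico (0 : ℝ) T, 0 ≤ lam t)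
    (hdiv : Tendsto (fun t => ∫ s in (0 : ℝ)..t, lam s) (nhdsWithin T (Set.Iio T)) atTop)
    (xi xi' : ℝ → ℝ)
    (hxibdd : ∃ K, ∀ t ∈ Set.Icc (0 : ℝ) T, |xi t| ≤ K)
    (hxi'cont : ContinuousOn xi' (Set.Icc 0 T))
    (hxi_deriv : ∀ t ∈ Set.Icc (0 : ℝ) T, HasDerivWithinAt xi (xi' t) (Set.Icc 0 T) t) :
    (∀ x : ℝ → ℝ,
      (∀ t ∈ Set.Ico (0 : ℝ) T,
          HasDerivWithinAt x (lam t * (Real.exp (xi t) - x t)) (Set.Ico 0 T) t) →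
      Tendsto x (nhdsWithin T (Set.Iio T)) (nhds (Real.exp (xi T)))) ∧
    (∀ B : ℝ,
      (∃ x : ℝ → ℝ,
        (∀ t ∈ Set.Ico (0 : ℝ) T,
            HasDerivWithinAt x (lam t * (Real.exp (xi t) - x t)) (Set.Ico 0 T) t) ∧
        Tendsto x (nhdsWithin T (Set.Iio T)) (nhds B)) ↔ B = Real.exp (xi T)) := by
  set Lam : ℝ → ℝ := fun u => ∫ s in (0:ℝ)..u, lam s with hLamdef
  set J : ℝ → ℝ := fun u => ∫ s in (0:ℝ)..u, xi' s * Real.exp (xi s) * Real.exp (Lam s)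
    with hJdef
  set g : ℝ → ℝ := fun s => xi' s * Real.exp (xi s) * Real.exp (Lam s) with hgdef
  have hIcoIcc : Set.Ico (0:ℝ) T ⊆ Set.Icc 0 T := Set.Ico_subset_Icc_self
  have hxicont : ContinuousOn xi (Set.Icc 0 T) :=
    fun t ht => (hxi_deriv t ht).continuousWithinAt
  have hLamderiv : ∀ t ∈ Set.Ico (0:ℝ) T, HasDerivWithinAt Lam (lam t) (Set.Ico 0 T) t :=
    fun t ht => ftc0 lam hlam_cont ht
  have hLamcont : ContinuousOn Lam (Set.Ico 0 T) :=
    fun t ht => (hLamderiv t ht).continuousWithinAt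
  have hgcont : ContinuousOn g (Set.Ico 0 T) := by
    apply ContinuousOn.mul
    · exact ((hxi'cont.mono hIcoIcc)).mul (Real.continuous_exp.comp_continuousOn
        (hxicont.mono hIcoIcc))
    · exact Real.continuous_exp.comp_continuousOn hLamcont
  have hJderiv : ∀ t ∈ Set.Ico (0:ℝ) T, HasDerivWithinAt J (g t) (Set.Ico 0 T) t :=
    fun t ht => ftc0 g hgcont ht
  have hmono : ∀ a b : ℝ, 0 ≤ a → a ≤ b → b < T → Lam a ≤ Lam b := by
    intro a b ha hab hbT
    have hint1 : IntervalIntegrable lam volume 0 a := by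
      apply ContinuousOn.intervalIntegrable
      rw [Set.uIcc_of_le ha]
      exact hlam_cont.mono (fun u hu => ⟨hu.1, lt_of_le_of_lt hu.2 (lt_of_le_of_lt hab hbT)⟩)
    have hint2 : IntervalIntegrable lam volume a b := by
      apply ContinuousOn.intervalIntegrable
      rw [Set.uIcc_of_le hab]
      exact hlam_cont.mono (fun u hu => ⟨le_trans ha hu.1, lt_of_le_of_lt hu.2 hbT⟩)
    have hadd : Lam a + (∫ s in a..b, lam s) = Lam b :=
      intervalIntegral.integral_add_adjacent_intervals hint1 hint2
    have hnn : 0 ≤ ∫ s in a..b, lam s := by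
      apply intervalIntegral.integral_nonneg hab
      intro u hu
      exact hlam_nonneg u ⟨le_trans ha hu.1, lt_of_le_of_lt hu.2 hbT⟩
    linarith
  -- bound on g
  obtain ⟨C, hC⟩ := (isCompact_Icc (a := (0:ℝ)) (b := T)).exists_bound_of_continuousOn
    ((hxi'cont).mul (Real.continuous_exp.comp_continuousOn hxicont))
  set M : ℝ := max C 0 with hMdef
  have hM : 0 ≤ M := le_max_right _ _
  have hbound : ∀ t ∈ Set.Ico (0:ℝ) T, |g t| ≤ M * Real.exp (Lam t) := by
    intro t ht
    have h1 : |xi' t| * Real.exp (xi t) ≤ M := le_trans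
      (by simpa [Real.norm_eq_abs, abs_mul, abs_of_pos (Real.exp_pos (xi t))]
        using hC t (hIcoIcc ht)) (le_max_left _ _)
    have h2 : |g t| = |xi' t| * Real.exp (xi t) * Real.exp (Lam t) := by
      rw [hgdef]
      simp [abs_mul, abs_of_pos (Real.exp_pos (xi t)), abs_of_pos (Real.exp_pos (Lam t))]
    rw [h2]
    exact mul_le_mul_of_nonneg_right h1 (le_of_lt (Real.exp_pos _))
  have hdecay := aux_decay hT Lam g M hM hgcont hbound hmono hdiv
  -- eventual membership
  have hev : ∀ᶠ t in nhdsWithin T (Set.Iio T), t ∈ Set.Ico 0 T := by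
    have h1 : ∀ᶠ t in nhdsWithin T (Set.Iio T), (0:ℝ) < t :=
      eventually_nhdsWithin_of_eventually_nhds (eventually_gt_nhds hT)
    filter_upwards [h1, eventually_mem_nhdsWithin] with t ha hb
    exact ⟨le_of_lt ha, hb⟩
  have hxiT : Tendsto (fun t => Real.exp (xi t)) (nhdsWithin T (Set.Iio T))
      (𝓝 (Real.exp (xi T))) := by
    have hcw : ContinuousWithinAt xi (Set.Icc 0 T) T :=
      hxicont T (Set.right_mem_Icc.mpr (le_of_lt hT))
    have hle : nhdsWithin T (Set.Iio T) ≤ nhdsWithin T (Set.Icc 0 T) := by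
      apply nhdsWithin_le_iff.mpr
      filter_upwards [hev] with t ht using hIcoIcc ht
    exact (Real.continuous_exp.continuousAt.tendsto.comp (hcw.tendsto.mono_left hle))
  have hexp0 : Tendsto (fun t => Real.exp (-(Lam t))) (nhdsWithin T (Set.Iio T)) (𝓝 0) :=
    Real.tendsto_exp_atBot.comp (tendsto_neg_atTop_atBot.comp hdiv)
  -- Part 1
  have part1 : ∀ x : ℝ → ℝ,
      (∀ t ∈ Set.Ico (0 : ℝ) T,
          HasDerivWithinAt x (lam t * (Real.exp (xi t) - x t)) (Set.Ico 0 T) t) →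
      Tendsto x (nhdsWithin T (Set.Iio T)) (nhds (Real.exp (xi T))) := by
    intro x hx
    set φ : ℝ → ℝ := fun u => Real.exp (Lam u) * (x u - Real.exp (xi u)) + J u with hφdef
    have hφderiv : ∀ t ∈ Set.Ico (0:ℝ) T, HasDerivWithinAt φ 0 (Set.Ico 0 T) t := by
      intro t ht
      have hL := hLamderiv t ht
      have hx' := hx t ht
      have hxi' := (hxi_deriv t (hIcoIcc ht)).mono hIcoIcc
      have hJd := hJderiv t ht
      have h1 := ((hL.exp.mul (hx'.sub hxi'.exp)).add hJd)
      convert h1 using 1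
      · rfl
      · rfl
      · rfl
      rw [hgdef, Pi.sub_apply]
      ring
    have hφconst : ∀ t ∈ Set.Ico (0:ℝ) T, φ t = φ 0 := by
      intro t ht
      rcases eq_or_lt_of_le ht.1 with h0 | h0
      · rw [← h0]
      · have hsub : Set.Icc (0:ℝ) t ⊆ Set.Ico 0 T :=
          fun u hu => ⟨hu.1, lt_of_le_of_lt hu.2 ht.2⟩
        have hφcont : ContinuousOn φ (Set.Ico 0 T) :=
          fun u hu => (hφderiv u hu).continuousWithinAt
        have hcont : ContinuousOn φ (Set.Icc 0 t) := hφcont.mono hsub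
        have hder : ∀ s ∈ Set.Ico (0:ℝ) t, HasDerivWithinAt φ 0 (Set.Ici s) s := by
          intro s hs
          have hsT : s < T := lt_trans hs.2 ht.2
          apply (hφderiv s ⟨hs.1, hsT⟩).mono_of_mem_nhdsWithin
          apply mem_nhdsWithin.mpr
          exact ⟨Set.Iio T, isOpen_Iio, hsT, fun u hu => ⟨le_trans hs.1 hu.2, hu.1⟩⟩
        exact constant_of_has_deriv_right_zero hcont hder t
          (Set.right_mem_Icc.mpr ht.1)
    have hφ0 : φ 0 = x 0 - Real.exp (xi 0) := by
      rw [hφdef]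
      simp [hLamdef, hJdef, intervalIntegral.integral_same]
    have hkey : ∀ t ∈ Set.Ico (0:ℝ) T,
        x t = Real.exp (xi t) + Real.exp (-(Lam t)) * ((x 0 - Real.exp (xi 0)) - J t) := by
      intro t ht
      have h1 := hφconst t ht
      rw [hφ0, hφdef] at h1
      have hee : Real.exp (-(Lam t)) * Real.exp (Lam t) = 1 := by
        rw [← Real.exp_add]; simp
      have h2 : Real.exp (Lam t) * (x t - Real.exp (xi t)) + J t
          = x 0 - Real.exp (xi 0) := h1
      linear_combination Real.exp (-(Lam t)) * h2 - (x t - Real.exp (xi t)) * hee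
    have hmain : Tendsto (fun t => Real.exp (xi t)
        + Real.exp (-(Lam t)) * ((x 0 - Real.exp (xi 0)) - J t))
        (nhdsWithin T (Set.Iio T)) (𝓝 (Real.exp (xi T))) := by
      have h1 : Tendsto (fun t => Real.exp (-(Lam t)) * (x 0 - Real.exp (xi 0)))
          (nhdsWithin T (Set.Iio T)) (𝓝 0) := by
        have := hexp0.mul_const (x 0 - Real.exp (xi 0))
        rwa [zero_mul] at this
      have h2 := hdecay
      have h3 : Tendsto (fun t => Real.exp (-(Lam t)) * ((x 0 - Real.exp (xi 0)) - J t))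
          (nhdsWithin T (Set.Iio T)) (𝓝 0) := by
        have := h1.sub h2
        rw [sub_zero] at this
        apply this.congr
        intro t
        rw [hJdef]
        ring
      have := hxiT.add h3
      rwa [add_zero] at this
    exact hmain.congr' (hev.mono fun t ht => (hkey t ht).symm)
  refine ⟨part1, fun B => ⟨?_, ?_⟩⟩
  · rintro ⟨x, hx, hlim⟩
    exact tendsto_nhds_unique hlim (part1 x hx)
  · intro hB
    subst hB
    refine ⟨fun u => Real.exp (xi u) - Real.exp (-(Lam u)) * J u, ?_, ?_⟩
    · intro t ht
      have hL := hLamderiv t ht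
      have hxi' := (hxi_deriv t (hIcoIcc ht)).mono hIcoIcc
      have hJd := hJderiv t ht
      have h1 := hxi'.exp.sub ((hL.neg.exp).mul hJd)
      have hee : Real.exp (-(Lam t)) * Real.exp (Lam t) = 1 := by
        rw [← Real.exp_add]; simp
      convert h1 using 1
      · rfl
      · rfl
      · rfl
      simp only [hgdef]
      linear_combination (xi' t * Real.exp (xi t)) * hee
    · exact part1 _ (by
        intro t ht
        have hL := hLamderiv t ht
        have hxi' := (hxi_deriv t (hIcoIcc ht)).mono hIcoIcc
        have hJd := hJderiv t ht
        have h1 := hxi'.exp.sub ((hL.neg.exp).mul hJd)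
        have hee : Real.exp (-(Lam t)) * Real.exp (Lam t) = 1 := by
          rw [← Real.exp_add]; simp
        convert h1 using 1
        · rfl
        · rfl
        · rfl
        simp only [hgdef]
        linear_combination (xi' t * Real.exp (xi t)) * hee)
end

section
/- Solvability criterion for the singular terminal-value ODE (the punchline of the Remark after Theorem 4.14, the ODE analogue of Lemma 4.13): Let T > 0, let λ : [0,T) → [0,∞) be continuous with ∫_0^t λ(s) ds → +∞ as t → T⁻, let ξ : [0,T] → ℝ be bounded and continuously differentiable, and let A ∈ ℝ. Then there exists a continuous function y : [0,T] → ℝ, differentiable on [0,T), satisfying y′(t) = λ(t)·(e^{ξ(t) − y(t)} − 1) for all t ∈ [0,T) and y(T) = A, if and only if A = ξ(T). -/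
open MeasureTheory Filter Topology Set


lemma my_primitive_deriv {T : ℝ} {f : ℝ → ℝ} (hf : ContinuousOn f (Ico 0 T))
    {t : ℝ} (ht : t ∈ Ico 0 T) :
    HasDerivWithinAt (fun u => ∫ s in (0:ℝ)..u, f s) (f t) (Ico 0 T) t := by
  obtain ⟨ht0, htT⟩ := ht
  set u : ℝ := (t + T) / 2 with hu
  have htu : t < u := by simp only [hu]; linarith
  have huT : u < T := by simp only [hu]; linarith
  have hint : IntervalIntegrable f volume 0 t :=
    (hf.mono (fun s hs => ⟨(Set.mem_Icc.1 ((Set.uIcc_of_le ht0) ▸ hs)).1,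
      lt_of_le_of_lt (Set.mem_Icc.1 ((Set.uIcc_of_le ht0) ▸ hs)).2 htT⟩)).intervalIntegrable
  have hcwa : ContinuousWithinAt f (Ico 0 T) t := hf t ⟨ht0, htT⟩
  -- right derivative, within Ici t
  have hmem_right : Ico t u ∈ nhdsWithin t (Ioi t) := by
    rw [mem_nhdsWithin_iff_exists_mem_nhds_inter]
    exact ⟨Iio u, Iio_mem_nhds htu, fun s hs => ⟨le_of_lt hs.2, hs.1⟩⟩
  have hIcosub : Ico t u ⊆ Ico 0 T := fun s hs => ⟨le_trans ht0 hs.1, hs.2.trans huT⟩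
  have hmeas_r : StronglyMeasurableAtFilter f (nhdsWithin t (Ioi t)) :=
    ⟨Ico t u, hmem_right, ((hf.mono hIcosub).aestronglyMeasurable measurableSet_Ico)⟩
  have hcwa_r : ContinuousWithinAt f (Ioi t) t :=
    hcwa.mono_of_mem_nhdsWithin (by
      rw [mem_nhdsWithin_iff_exists_mem_nhds_inter]
      exact ⟨Iio T, Iio_mem_nhds htT, fun s hs => ⟨le_trans ht0 (le_of_lt hs.2), hs.1⟩⟩)
  have hright : HasDerivWithinAt (fun u => ∫ s in (0:ℝ)..u, f s) (f t) (Ici t) t :=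
    intervalIntegral.integral_hasDerivWithinAt_right hint hmeas_r hcwa_r
  rcases eq_or_lt_of_le ht0 with h0 | h0
  · exact hright.mono (fun s hs => h0 ▸ hs.1)
  · -- left derivative as well
    have hmem_left : Ioc 0 t ∈ nhdsWithin t (Iic t) := by
      rw [mem_nhdsWithin_iff_exists_mem_nhds_inter]
      exact ⟨Ioi 0, Ioi_mem_nhds h0, fun s hs => ⟨hs.1, hs.2⟩⟩
    have hIocsub : Ioc 0 t ⊆ Ico 0 T := fun s hs => ⟨le_of_lt hs.1, lt_of_le_of_lt hs.2 htT⟩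
    have hmeas_l : StronglyMeasurableAtFilter f (nhdsWithin t (Iic t)) :=
      ⟨Ioc 0 t, hmem_left, ((hf.mono hIocsub).aestronglyMeasurable measurableSet_Ioc)⟩
    have hcwa_l : ContinuousWithinAt f (Iic t) t :=
      hcwa.mono_of_mem_nhdsWithin (by
        rw [mem_nhdsWithin_iff_exists_mem_nhds_inter]
        exact ⟨Ioi 0, Ioi_mem_nhds h0, fun s hs => ⟨le_of_lt hs.1, lt_of_le_of_lt hs.2 htT⟩⟩)
    have hleft : HasDerivWithinAt (fun u => ∫ s in (0:ℝ)..u, f s) (f t) (Iic t) t :=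
      intervalIntegral.integral_hasDerivWithinAt_right hint hmeas_l hcwa_l
    have h2 := hleft.union hright
    rw [Iic_union_Ici] at h2
    exact (hasDerivWithinAt_univ.1 h2).hasDerivWithinAt

/-- Solvability criterion for the singular terminal-value ODE
y′ = λ(e^{ξ−y} − 1) on [0,T) with y(T) = A: a continuous solution on [0,T],
differentiable on [0,T), exists if and only if A = ξ(T). -/
theorem stmt_9 (T : ℝ) (hT : 0 < T) (lam : ℝ → ℝ)
    (hlam_cont : ContinuousOn lam (Set.Ico 0 T))
    (hlam_nonneg : ∀ t ∈ Set.Ico (0 : ℝ) T, 0 ≤ lam t)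
    (hdiv : Tendsto (fun t => ∫ s in (0 : ℝ)..t, lam s) (nhdsWithin T (Set.Iio T)) atTop)
    (xi xi' : ℝ → ℝ)
    (hxibdd : ∃ K, ∀ t ∈ Set.Icc (0 : ℝ) T, |xi t| ≤ K)
    (hxi'cont : ContinuousOn xi' (Set.Icc 0 T))
    (hxi_deriv : ∀ t ∈ Set.Icc (0 : ℝ) T, HasDerivWithinAt xi (xi' t) (Set.Icc 0 T) t)
    (A : ℝ) :
    (∃ y : ℝ → ℝ, ContinuousOn y (Set.Icc 0 T) ∧
      (∀ t ∈ Set.Ico (0 : ℝ) T,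
        HasDerivWithinAt y (lam t * (Real.exp (xi t - y t) - 1)) (Set.Ico 0 T) t) ∧
      y T = A) ↔ A = xi T := by
  have hTmem : T ∈ Set.Icc (0:ℝ) T := ⟨hT.le, le_refl T⟩
  set Λ : ℝ → ℝ := fun t => ∫ s in (0:ℝ)..t, lam s with hΛdef
  have hΛderiv : ∀ t ∈ Set.Ico (0:ℝ) T, HasDerivWithinAt Λ (lam t) (Set.Ico 0 T) t :=
    fun t ht => my_primitive_deriv hlam_cont ht
  have hΛderivAt : ∀ t ∈ Set.Ioo (0:ℝ) T, HasDerivAt Λ (lam t) t := by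
    intro t ht
    exact (hΛderiv t ⟨ht.1.le, ht.2⟩).hasDerivAt
      (mem_nhds_iff.2 ⟨Set.Ioo 0 T, fun s hs => ⟨hs.1.le, hs.2⟩, isOpen_Ioo, ht⟩)
  have hΛcont : ContinuousOn Λ (Set.Ico 0 T) := fun t ht => (hΛderiv t ht).continuousWithinAt
  have hξcont : ContinuousOn xi (Set.Icc 0 T) := fun t ht => (hxi_deriv t ht).continuousWithinAt
  have hdiv' : Tendsto Λ (nhdsWithin T (Set.Iio T)) atTop := hdiv
  constructor
  · rintro ⟨y, hycont, hyderiv, hyT⟩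
    by_contra hne
    obtain ⟨B, hB⟩ := IsCompact.exists_bound_of_continuousOn isCompact_Icc hycont
    have hdiffT : Tendsto (fun t => xi t - y t) (nhdsWithin T (Set.Icc 0 T)) (𝓝 (xi T - A)) := by
      have := ((hξcont T hTmem).sub (hycont T hTmem))
      rw [ContinuousWithinAt] at this
      rwa [Pi.sub_apply, hyT] at this
    -- generic contradiction machine
    have key : ∀ c : ℝ, 0 < c → ∀ t₀, t₀ ∈ Set.Ico (0:ℝ) T →
        (∀ u ∈ Set.Ico t₀ T, c * Λ u ≤ c * Λ t₀ + 2 * B) → False := by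
      intro c hc t₀ ht₀ hbound
      have h1 : ∀ᶠ u in nhdsWithin T (Set.Iio T), (c * Λ t₀ + 2 * B) / c < Λ u :=
        hdiv'.eventually_gt_atTop _
      have h2 : ∀ᶠ u in nhdsWithin T (Set.Iio T), t₀ < u :=
        eventually_nhdsWithin_of_eventually_nhds (eventually_gt_nhds ht₀.2)
      obtain ⟨u, hu1, hu2, hu3⟩ := (h1.and (h2.and self_mem_nhdsWithin)).exists
      have := hbound u ⟨hu2.le, hu3⟩
      rw [div_lt_iff₀ hc] at hu1
      nlinarith
    rcases lt_or_gt_of_ne hne with hlt | hgt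
    · -- A < xi T : y increases without bound
      set ε := xi T - A with hε
      have hεpos : 0 < ε := by simp [hε]; linarith
      set c := Real.exp (ε/2) - 1 with hcdef
      have hcpos : 0 < c := by
        have : (1:ℝ) < Real.exp (ε/2) := Real.one_lt_exp_iff.2 (by linarith)
        simp [hcdef]; linarith
      have hev : ∀ᶠ t in nhdsWithin T (Set.Icc 0 T), ε/2 < xi t - y t :=
        hdiffT.eventually_const_lt (by simp [hε]; linarith)
      rw [eventually_nhdsWithin_iff, Metric.eventually_nhds_iff] at hev
      obtain ⟨δ, hδpos, hδ⟩ := hev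
      set t₀ := max 0 (T - δ/2) with ht₀def
      have ht₀mem : t₀ ∈ Set.Ico (0:ℝ) T := ⟨le_max_left _ _, by
        apply max_lt hT; linarith⟩
      have hP : ∀ t ∈ Set.Ico t₀ T, ε/2 < xi t - y t := by
        intro t ht
        have hle : T - δ/2 ≤ t := le_trans (le_max_right 0 (T - δ/2)) ht.1
        have hd : dist t T < δ := by
          rw [Real.dist_eq, abs_sub_lt_iff]
          constructor <;> [skip; skip] <;> linarith [ht.2]
        exact hδ hd ⟨le_trans ht₀mem.1 ht.1, ht.2.le⟩
      apply key c hcpos t₀ ht₀mem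
      intro u hu
      have hmono : MonotoneOn (fun t => y t - c * Λ t) (Set.Icc t₀ u) := by
        apply monotoneOn_of_hasDerivWithinAt_nonneg (f' := fun t =>
          lam t * (Real.exp (xi t - y t) - 1) - c * lam t) (convex_Icc _ _)
        · apply ContinuousOn.sub
          · exact hycont.mono (fun s hs => ⟨le_trans ht₀mem.1 hs.1, le_trans hs.2 hu.2.le⟩)
          · exact (hΛcont.mono (fun s hs =>
              ⟨le_trans ht₀mem.1 hs.1, lt_of_le_of_lt hs.2 hu.2⟩)).const_smul c
        · rw [interior_Icc]
          intro x hx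
          have hx' : x ∈ Set.Ioo (0:ℝ) T := ⟨lt_of_le_of_lt ht₀mem.1 hx.1, hx.2.trans hu.2⟩
          have hy' : HasDerivAt y (lam x * (Real.exp (xi x - y x) - 1)) x :=
            (hyderiv x ⟨hx'.1.le, hx'.2⟩).hasDerivAt
              (mem_nhds_iff.2 ⟨Set.Ioo 0 T, fun s hs => ⟨hs.1.le, hs.2⟩, isOpen_Ioo, hx'⟩)
          exact ((hy'.sub ((hΛderivAt x hx').const_mul c))).hasDerivWithinAt
        · rw [interior_Icc]
          intro x hx
          have hx2 : x ∈ Set.Ico t₀ T := ⟨hx.1.le, hx.2.trans hu.2⟩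
          have h3 : Real.exp (ε/2) ≤ Real.exp (xi x - y x) := Real.exp_le_exp.2 (hP x hx2).le
          have h4 := hlam_nonneg x ⟨le_trans ht₀mem.1 hx2.1, hx2.2⟩
          have : 0 ≤ lam x * (Real.exp (xi x - y x) - Real.exp (ε/2)) :=
            mul_nonneg h4 (by linarith)
          simp only [hcdef]; nlinarith
      have := hmono (Set.left_mem_Icc.2 hu.1) (Set.right_mem_Icc.2 hu.1) hu.1
      simp only at this
      have hyu := hB u ⟨le_trans ht₀mem.1 hu.1, hu.2.le⟩
      have hyt₀ := hB t₀ ⟨ht₀mem.1, ht₀mem.2.le⟩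
      rw [Real.norm_eq_abs, abs_le] at hyu hyt₀
      linarith
    · -- xi T < A : y decreases without bound
      set ε := A - xi T with hε
      have hεpos : 0 < ε := by simp [hε]; linarith
      set c := 1 - Real.exp (-(ε/2)) with hcdef
      have hcpos : 0 < c := by
        have : Real.exp (-(ε/2)) < 1 := Real.exp_lt_one_iff.2 (by linarith)
        simp [hcdef]; linarith
      have hev : ∀ᶠ t in nhdsWithin T (Set.Icc 0 T), xi t - y t < -(ε/2) :=
        hdiffT.eventually_lt_const (by simp [hε]; linarith)
      rw [eventually_nhdsWithin_iff, Metric.eventually_nhds_iff] at hev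
      obtain ⟨δ, hδpos, hδ⟩ := hev
      set t₀ := max 0 (T - δ/2) with ht₀def
      have ht₀mem : t₀ ∈ Set.Ico (0:ℝ) T := ⟨le_max_left _ _, by
        apply max_lt hT; linarith⟩
      have hP : ∀ t ∈ Set.Ico t₀ T, xi t - y t < -(ε/2) := by
        intro t ht
        have hle : T - δ/2 ≤ t := le_trans (le_max_right 0 (T - δ/2)) ht.1
        have hd : dist t T < δ := by
          rw [Real.dist_eq, abs_sub_lt_iff]
          constructor <;> [skip; skip] <;> linarith [ht.2]
        exact hδ hd ⟨le_trans ht₀mem.1 ht.1, ht.2.le⟩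
      apply key c hcpos t₀ ht₀mem
      intro u hu
      have hmono : AntitoneOn (fun t => y t + c * Λ t) (Set.Icc t₀ u) := by
        apply antitoneOn_of_hasDerivWithinAt_nonpos (f' := fun t =>
          lam t * (Real.exp (xi t - y t) - 1) + c * lam t) (convex_Icc _ _)
        · apply ContinuousOn.add
          · exact hycont.mono (fun s hs => ⟨le_trans ht₀mem.1 hs.1, le_trans hs.2 hu.2.le⟩)
          · exact (hΛcont.mono (fun s hs =>
              ⟨le_trans ht₀mem.1 hs.1, lt_of_le_of_lt hs.2 hu.2⟩)).const_smul c
        · rw [interior_Icc]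
          intro x hx
          have hx' : x ∈ Set.Ioo (0:ℝ) T := ⟨lt_of_le_of_lt ht₀mem.1 hx.1, hx.2.trans hu.2⟩
          have hy' : HasDerivAt y (lam x * (Real.exp (xi x - y x) - 1)) x :=
            (hyderiv x ⟨hx'.1.le, hx'.2⟩).hasDerivAt
              (mem_nhds_iff.2 ⟨Set.Ioo 0 T, fun s hs => ⟨hs.1.le, hs.2⟩, isOpen_Ioo, hx'⟩)
          exact ((hy'.add ((hΛderivAt x hx').const_mul c))).hasDerivWithinAt
        · rw [interior_Icc]
          intro x hx
          have hx2 : x ∈ Set.Ico t₀ T := ⟨hx.1.le, hx.2.trans hu.2⟩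
          have h3 : Real.exp (xi x - y x) ≤ Real.exp (-(ε/2)) := Real.exp_le_exp.2 (hP x hx2).le
          have h4 := hlam_nonneg x ⟨le_trans ht₀mem.1 hx2.1, hx2.2⟩
          have : lam x * (Real.exp (xi x - y x) - Real.exp (-(ε/2))) ≤ 0 :=
            mul_nonpos_of_nonneg_of_nonpos h4 (by linarith)
          simp only [hcdef]; nlinarith
      have := hmono (Set.left_mem_Icc.2 hu.1) (Set.right_mem_Icc.2 hu.1) hu.1
      simp only at this
      have hyu := hB u ⟨le_trans ht₀mem.1 hu.1, hu.2.le⟩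
      have hyt₀ := hB t₀ ⟨ht₀mem.1, ht₀mem.2.le⟩
      rw [Real.norm_eq_abs, abs_le] at hyu hyt₀
      linarith
  · intro hA
    subst hA
    -- interval integrability helper
    have hsub : ∀ t ∈ Set.Ico (0:ℝ) T, Icc (0:ℝ) t ⊆ Ico 0 T :=
      fun t ht s hs => ⟨hs.1, lt_of_le_of_lt hs.2 ht.2⟩
    have hII : ∀ g : ℝ → ℝ, ContinuousOn g (Ico 0 T) → ∀ t ∈ Set.Ico (0:ℝ) T,
        IntervalIntegrable g volume 0 t := by
      intro g hg t ht
      exact ((hg.mono (hsub t ht)).mono (by rw [Set.uIcc_of_le ht.1])).intervalIntegrable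
    -- monotonicity of Λ
    have hΛle : ∀ s ∈ Set.Ico (0:ℝ) T, ∀ t ∈ Set.Ico (0:ℝ) T, s ≤ t → Λ s ≤ Λ t := by
      intro s hs t ht hst
      have h1 := hII lam hlam_cont t ht
      have h2 := hII lam hlam_cont s hs
      have h3 := intervalIntegral.integral_interval_sub_left h1 h2
      have hnn : 0 ≤ ∫ u in s..t, lam u :=
        intervalIntegral.integral_nonneg hst
          (fun u hu => hlam_nonneg u ⟨le_trans hs.1 hu.1, lt_of_le_of_lt hu.2 ht.2⟩)
      have : Λ t - Λ s = ∫ u in s..t, lam u := h3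
      linarith
    set φ : ℝ → ℝ := fun s => lam s * Real.exp (Λ s + xi s) with hφdef
    set ψ : ℝ → ℝ := fun s => xi' s * Real.exp (Λ s + xi s) with hψdef
    have hexpcont : ContinuousOn (fun s => Real.exp (Λ s + xi s)) (Ico 0 T) :=
      Real.continuous_exp.comp_continuousOn (hΛcont.add (hξcont.mono Ico_subset_Icc_self))
    have hφcont : ContinuousOn φ (Ico 0 T) := hlam_cont.mul hexpcont
    have hψcont : ContinuousOn ψ (Ico 0 T) :=
      (hxi'cont.mono Ico_subset_Icc_self).mul hexpcont
    set F : ℝ → ℝ := fun t => ∫ s in (0:ℝ)..t, φ s with hFdef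
    set R : ℝ → ℝ := fun t => ∫ s in (0:ℝ)..t, ψ s with hRdef
    have hFderiv : ∀ t ∈ Set.Ico (0:ℝ) T, HasDerivWithinAt F (φ t) (Ico 0 T) t :=
      fun t ht => my_primitive_deriv hφcont ht
    set x : ℝ → ℝ := fun t => Real.exp (-Λ t) * (Real.exp (xi 0) + F t) with hxdef
    have hFnonneg : ∀ t ∈ Set.Ico (0:ℝ) T, 0 ≤ F t := by
      intro t ht
      apply intervalIntegral.integral_nonneg ht.1
      intro s hs
      exact mul_nonneg (hlam_nonneg s (hsub t ht hs)) (Real.exp_nonneg _)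
    have hxpos : ∀ t ∈ Set.Ico (0:ℝ) T, 0 < x t := by
      intro t ht
      exact mul_pos (Real.exp_pos _)
        (add_pos_of_pos_of_nonneg (Real.exp_pos _) (hFnonneg t ht))
    have hxderiv : ∀ t ∈ Set.Ico (0:ℝ) T,
        HasDerivWithinAt x (lam t * Real.exp (xi t) - lam t * x t) (Ico 0 T) t := by
      intro t ht
      have h1 : HasDerivWithinAt (fun u => Real.exp (-Λ u))
          (Real.exp (-Λ t) * (-lam t)) (Ico 0 T) t := ((hΛderiv t ht).neg).exp
      have h2 : HasDerivWithinAt (fun u => Real.exp (xi 0) + F u) (φ t) (Ico 0 T) t :=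
        (hFderiv t ht).const_add _
      have h3 := h1.mul h2
      have he : Real.exp (-Λ t) * Real.exp (Λ t + xi t) = Real.exp (xi t) := by
        rw [← Real.exp_add]; ring_nf
      refine h3.congr_deriv (Eq.symm ?_)
      simp only [hφdef, hxdef]
      linear_combination (-(lam t)) * he
    set y : ℝ → ℝ := fun t => if t < T then Real.log (x t) else xi T with hydef
    have hyx : ∀ s ∈ Set.Ico (0:ℝ) T, y s = Real.log (x s) := fun s hs => if_pos hs.2
    have hyderiv : ∀ t ∈ Set.Ico (0:ℝ) T,
        HasDerivWithinAt y (lam t * (Real.exp (xi t - y t) - 1)) (Ico 0 T) t := by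
      intro t ht
      have hpos := hxpos t ht
      have hlog : HasDerivWithinAt (fun u => Real.log (x u))
          ((lam t * Real.exp (xi t) - lam t * x t) / x t) (Ico 0 T) t :=
        (hxderiv t ht).log hpos.ne'
      have heq : lam t * (Real.exp (xi t - y t) - 1)
          = (lam t * Real.exp (xi t) - lam t * x t) / x t := by
        rw [hyx t ht, Real.exp_sub, Real.exp_log hpos]
        field_simp
      rw [heq]
      exact hlog.congr hyx (hyx t ht)
    -- the identity x t = exp(xi t) - exp(-Λ t) * R t
    have hident : ∀ t ∈ Set.Ico (0:ℝ) T, x t = Real.exp (xi t) - Real.exp (-Λ t) * R t := by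
      intro t ht
      have hFTC : ∫ s in (0:ℝ)..t, (lam s + xi' s) * Real.exp (Λ s + xi s)
          = Real.exp (Λ t + xi t) - Real.exp (Λ 0 + xi 0) := by
        apply intervalIntegral.integral_eq_sub_of_hasDeriv_right_of_le ht.1
        · exact Real.continuous_exp.comp_continuousOn
            ((hΛcont.mono (hsub t ht)).add
              (hξcont.mono (fun s hs => ⟨hs.1, le_trans hs.2 ht.2.le⟩)))
        · intro s hs
          have hsIoo : s ∈ Set.Ioo (0:ℝ) T := ⟨hs.1, hs.2.trans ht.2⟩
          have hΛs := hΛderivAt s hsIoo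
          have hξs : HasDerivAt xi (xi' s) s :=
            (hxi_deriv s ⟨hsIoo.1.le, hsIoo.2.le⟩).hasDerivAt
              (mem_nhds_iff.2 ⟨Set.Ioo 0 T, fun u hu => ⟨hu.1.le, hu.2.le⟩, isOpen_Ioo, hsIoo⟩)
          have := (hΛs.add hξs).exp
          have h5 : HasDerivAt (fun u => Real.exp (Λ u + xi u))
              ((lam s + xi' s) * Real.exp (Λ s + xi s)) s := by
            exact this.congr_deriv (mul_comm _ _)
          exact h5.hasDerivWithinAt
        · have : ContinuousOn (fun s => (lam s + xi' s) * Real.exp (Λ s + xi s)) (Ico 0 T) :=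
            (hlam_cont.add (hxi'cont.mono Ico_subset_Icc_self)).mul hexpcont
          exact hII _ this t ht
      have hΛ0 : Λ 0 = 0 := intervalIntegral.integral_same
      have hadd : (∫ s in (0:ℝ)..t, (lam s + xi' s) * Real.exp (Λ s + xi s)) = F t + R t := by
        rw [hFdef, hRdef]
        simp only [hφdef, hψdef]
        rw [← intervalIntegral.integral_add (hII φ hφcont t ht) (hII ψ hψcont t ht)]
        congr 1
        funext s
        simp only [hφdef, hψdef]
        ring
      have hF : F t = Real.exp (Λ t + xi t) - Real.exp (xi 0) - R t := by
        rw [hΛ0, zero_add] at hFTC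
        linarith [hadd ▸ hFTC]
      have he : Real.exp (-Λ t) * Real.exp (Λ t + xi t) = Real.exp (xi t) := by
        rw [← Real.exp_add]; ring_nf
      rw [hxdef]
      simp only
      rw [hF]
      linear_combination he
    -- the remainder tends to zero
    have hRtend : Tendsto (fun t => Real.exp (-Λ t) * R t) (nhdsWithin T (Ico 0 T)) (𝓝 0) := by
      obtain ⟨M0, hM0⟩ := IsCompact.exists_bound_of_continuousOn isCompact_Icc
        (hxi'cont.mul (Real.continuous_exp.comp_continuousOn hξcont))
      set M := max M0 0 with hMdef
      have hMnn : 0 ≤ M := le_max_right _ _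
      have hM : ∀ s ∈ Set.Icc (0:ℝ) T, |xi' s * Real.exp (xi s)| ≤ M := by
        intro s hs
        exact le_trans (hM0 s hs) (le_max_left _ _)
      have hexp0 : Tendsto (fun t => Real.exp (-Λ t)) (nhdsWithin T (Ico 0 T)) (𝓝 0) := by
        apply Real.tendsto_exp_atBot.comp
        apply tendsto_neg_atTop_atBot.comp
        exact hdiv'.mono_left (nhdsWithin_mono T Set.Ico_subset_Iio_self)
      rw [NormedAddCommGroup.tendsto_nhds_zero]
      intro ε hε
      have hpos2 : 0 < ε / (2 * (M + 1)) := by positivity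
      set t₀ := max 0 (T - ε / (2 * (M + 1))) with ht₀def
      have ht₀mem : t₀ ∈ Set.Ico (0:ℝ) T := ⟨le_max_left _ _, max_lt hT (by linarith)⟩
      have ht₀le : T - ε / (2 * (M + 1)) ≤ t₀ := le_max_right _ _
      have hMT : M * (T - t₀) < ε / 2 := by
        have h1 : T - t₀ ≤ ε / (2 * (M + 1)) := by linarith
        have h2 : 0 ≤ T - t₀ := by linarith [ht₀mem.2.le]
        have h3 : M * (T - t₀) ≤ M * (ε / (2 * (M + 1))) := mul_le_mul_of_nonneg_left h1 hMnn
        have h4 : M * (ε / (2 * (M + 1))) < ε / 2 := by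
          have hD : (0:ℝ) < 2 * (M + 1) := by positivity
          rw [← mul_lt_mul_iff_left₀ hD]
          field_simp
          nlinarith
        linarith
      have h1 : ∀ᶠ t in nhdsWithin T (Ico 0 T), Real.exp (-Λ t) * |R t₀| < ε / 2 := by
        have h0 := hexp0.mul_const |R t₀|
        rw [zero_mul] at h0
        exact h0.eventually_lt_const (by positivity)
      have h2 : ∀ᶠ t in nhdsWithin T (Ico 0 T), t₀ < t :=
        eventually_nhdsWithin_of_eventually_nhds (eventually_gt_nhds ht₀mem.2)
      filter_upwards [h1, h2, self_mem_nhdsWithin] with t hA hB hC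
      have ht0t : t₀ ≤ t := hB.le
      have hRsub : R t - R t₀ = ∫ s in t₀..t, ψ s :=
        intervalIntegral.integral_interval_sub_left (hII ψ hψcont t hC) (hII ψ hψcont t₀ ht₀mem)
      have hbound : |R t - R t₀| ≤ (M * Real.exp (Λ t)) * |t - t₀| := by
        rw [hRsub, ← Real.norm_eq_abs]
        apply intervalIntegral.norm_integral_le_of_norm_le_const
        intro s hs
        rw [Set.uIoc_of_le ht0t] at hs
        have hsmem : s ∈ Set.Ico (0:ℝ) T := ⟨le_trans ht₀mem.1 hs.1.le, lt_of_le_of_lt hs.2 hC.2⟩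
        have hΛs : Λ s ≤ Λ t := hΛle s hsmem t hC hs.2
        have : ψ s = (xi' s * Real.exp (xi s)) * Real.exp (Λ s) := by
          simp only [hψdef]
          rw [Real.exp_add]
          ring
        rw [this, Real.norm_eq_abs, abs_mul, abs_of_pos (Real.exp_pos _)]
        apply mul_le_mul (hM s ⟨hsmem.1, hsmem.2.le⟩) (Real.exp_le_exp.2 hΛs)
          (Real.exp_nonneg _) hMnn
      have he1 : Real.exp (-Λ t) * Real.exp (Λ t) = 1 := by
        rw [← Real.exp_add]; simp
      have habs : |t - t₀| = t - t₀ := abs_of_nonneg (by linarith)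
      have hRt : |R t| ≤ |R t₀| + (M * Real.exp (Λ t)) * (t - t₀) := by
        have : |R t| ≤ |R t₀| + |R t - R t₀| := by
          have := abs_add_le (R t₀) (R t - R t₀)
          simp only [add_sub_cancel] at this
          linarith
        rw [habs] at hbound
        linarith
      have hexpnn : 0 ≤ Real.exp (-Λ t) := Real.exp_nonneg _
      rw [norm_mul, Real.norm_eq_abs, Real.norm_eq_abs, abs_of_pos (Real.exp_pos _)]
      have hstep : Real.exp (-Λ t) * |R t|
          ≤ Real.exp (-Λ t) * |R t₀| + M * (t - t₀) := by
        have := mul_le_mul_of_nonneg_left hRt hexpnn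
        have hexpand : Real.exp (-Λ t) * (|R t₀| + (M * Real.exp (Λ t)) * (t - t₀))
            = Real.exp (-Λ t) * |R t₀|
              + M * (Real.exp (-Λ t) * Real.exp (Λ t)) * (t - t₀) := by ring
        rw [hexpand, he1] at this
        linarith
      have htT : t - t₀ ≤ T - t₀ := by linarith [hC.2.le]
      have hMt : M * (t - t₀) ≤ M * (T - t₀) := mul_le_mul_of_nonneg_left htT hMnn
      linarith
    -- limits of x and y at T
    have hxtend : Tendsto x (nhdsWithin T (Ico 0 T)) (𝓝 (Real.exp (xi T))) := by
      have hξT : Tendsto (fun t => Real.exp (xi t)) (nhdsWithin T (Ico 0 T))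
          (𝓝 (Real.exp (xi T))) := by
        apply (Real.continuous_exp.tendsto _).comp
        exact (hξcont T hTmem).mono_left (nhdsWithin_mono T Ico_subset_Icc_self)
      have := hξT.sub hRtend
      rw [sub_zero] at this
      apply this.congr'
      filter_upwards [self_mem_nhdsWithin] with s hs
      exact (hident s hs).symm
    have hytend : Tendsto y (nhdsWithin T (Ico 0 T)) (𝓝 (xi T)) := by
      have hlogx : Tendsto (fun t => Real.log (x t)) (nhdsWithin T (Ico 0 T))
          (𝓝 (Real.log (Real.exp (xi T)))) :=
        ((Real.continuousAt_log (Real.exp_pos _).ne').tendsto).comp hxtend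
      rw [Real.log_exp] at hlogx
      apply hlogx.congr'
      filter_upwards [self_mem_nhdsWithin] with s hs
      exact (hyx s hs).symm
    have hyTval : y T = xi T := if_neg (lt_irrefl T)
    refine ⟨y, ?_, hyderiv, hyTval⟩
    -- continuity on Icc 0 T
    intro t ht
    rcases eq_or_lt_of_le ht.2 with htT | htT
    · -- t = T
      subst htT
      rw [ContinuousWithinAt, hyTval]
      have hins : Icc (0:ℝ) t = insert t (Ico 0 t) := (Set.Ico_insert_right ht.1).symm
      rw [hins, nhdsWithin_insert]
      rw [tendsto_sup]
      constructor
      · have : Tendsto y (pure t) (𝓝 (y t)) := tendsto_pure_nhds y t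
        rwa [hyTval] at this
      · exact hytend
    · have hcwa : ContinuousWithinAt y (Ico 0 T) t := (hyderiv t ⟨ht.1, htT⟩).continuousWithinAt
      apply hcwa.mono_of_mem_nhdsWithin
      rw [mem_nhdsWithin_iff_exists_mem_nhds_inter]
      exact ⟨Iio T, Iio_mem_nhds htT, fun s hs => ⟨hs.2.1, hs.1⟩⟩
end
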